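/- arXiv:2403.11391 — 7 statements merged into one kernel-verified Lean document; each statement's English description precedes it below -/
import Mathlib

section
/- Let W = W₂W₁ be a fixed product of two matrices W₁ ∈ ℝ^{p×d} and W₂ ∈ ℝ^{p×p}. Among all factorizations W = W₂W₁, the norm ‖W₁ᵀW₁‖_F² + ‖W₂ᵀW₂‖_F² is minimized if and only if W₁W₁ᵀ = W₂ᵀW₂. -/
open Matrix


lemma tr_sq_nonneg {m n : Type*} [Fintype m] [Fintype n] (X : Matrix m n ℝ) :
    0 ≤ trace (Xᵀ * X) := by
  have h : trace (Xᵀ * X) = ∑ j, ∑ i, X i j ^ 2 := by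
    simp [Matrix.trace, Matrix.mul_apply, Matrix.diag, sq]
  rw [h]; positivity

lemma tr_sq_eq_zero {m n : Type*} [Fintype m] [Fintype n] (X : Matrix m n ℝ)
    (h : trace (Xᵀ * X) = 0) : X = 0 := by
  have h' : trace (Xᵀ * X) = ∑ j, ∑ i, X i j ^ 2 := by
    simp [Matrix.trace, Matrix.mul_apply, Matrix.diag, sq]
  rw [h'] at h
  ext i j
  have := (Finset.sum_eq_zero_iff_of_nonneg (fun j _ => by positivity)).mp h j (Finset.mem_univ j)
  have := (Finset.sum_eq_zero_iff_of_nonneg (fun i _ => by positivity)).mp this i (Finset.mem_univ i)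
  simpa using pow_eq_zero_iff (n := 2) (by norm_num) |>.mp this


lemma key_identity {p d : ℕ} (A : Matrix (Fin p) (Fin d) ℝ) (B : Matrix (Fin p) (Fin p) ℝ) :
    trace ((Aᵀ * A)ᵀ * (Aᵀ * A)) + trace ((Bᵀ * B)ᵀ * (Bᵀ * B)) =
      trace ((A * Aᵀ - Bᵀ * B)ᵀ * (A * Aᵀ - Bᵀ * B)) + 2 * trace ((B * A)ᵀ * (B * A)) := by
  have h1 : trace ((Aᵀ * A)ᵀ * (Aᵀ * A)) = trace ((A * Aᵀ) * (A * Aᵀ)) := by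
    rw [transpose_mul, transpose_transpose,
      show Aᵀ * A * (Aᵀ * A) = Aᵀ * (A * Aᵀ * A) by simp only [Matrix.mul_assoc],
      trace_mul_comm]
    congr 1
    simp only [Matrix.mul_assoc]
  have h2 : trace ((Bᵀ * B)ᵀ * (Bᵀ * B)) = trace ((Bᵀ * B) * (Bᵀ * B)) := by
    rw [transpose_mul, transpose_transpose]
  have h3 : trace ((A * Aᵀ) * (Bᵀ * B)) = trace ((B * A)ᵀ * (B * A)) := by
    rw [transpose_mul, trace_mul_comm (A * Aᵀ) (Bᵀ * B),
      show Aᵀ * Bᵀ * (B * A) = Aᵀ * (Bᵀ * (B * A)) by simp only [Matrix.mul_assoc],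
      trace_mul_comm Aᵀ (Bᵀ * (B * A))]
    congr 1
    simp only [Matrix.mul_assoc]
  have h4 : trace ((Bᵀ * B) * (A * Aᵀ)) = trace ((B * A)ᵀ * (B * A)) := by
    rw [trace_mul_comm, h3]
  have hD : (A * Aᵀ - Bᵀ * B)ᵀ = A * Aᵀ - Bᵀ * B := by
    simp [transpose_sub, transpose_mul]
  rw [hD, Matrix.sub_mul, Matrix.mul_sub, Matrix.mul_sub, trace_sub, trace_sub, trace_sub]
  linarith


lemma exists_balanced {p d : ℕ} (W : Matrix (Fin p) (Fin d) ℝ) :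
    ∃ (A : Matrix (Fin p) (Fin d) ℝ) (B : Matrix (Fin p) (Fin p) ℝ),
      B * A = W ∧ A * Aᵀ = Bᵀ * B := by
  have hH : (W * Wᵀ).PosSemidef := by
    have := posSemidef_self_mul_conjTranspose W
    rwa [conjTranspose_eq_transpose_of_trivial] at this
  have hHer : (W * Wᵀ).IsHermitian := hH.1
  set U : Matrix (Fin p) (Fin p) ℝ := (hHer.eigenvectorUnitary : Matrix (Fin p) (Fin p) ℝ) with hUdef
  set μ : Fin p → ℝ := hHer.eigenvalues with hμdef
  have hμ0 : ∀ i, 0 ≤ μ i := hH.eigenvalues_nonneg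
  have hstar : star U = Uᵀ := by
    rw [Matrix.star_eq_conjTranspose, conjTranspose_eq_transpose_of_trivial]
  have hcoe : (RCLike.ofReal ∘ μ : Fin p → ℝ) = μ := by
    ext i; simp
  have hspec : W * Wᵀ = U * diagonal μ * Uᵀ := by
    have := hHer.spectral_theorem
    rw [Unitary.conjStarAlgAut_apply] at this
    rwa [hstar, hcoe] at this
  have hU1 : U * Uᵀ = 1 := by
    have := (Matrix.mem_unitaryGroup_iff).mp hHer.eigenvectorUnitary.2
    rwa [hstar] at this
  have hU2 : Uᵀ * U = 1 := by
    have := (Matrix.mem_unitaryGroup_iff').mp hHer.eigenvectorUnitary.2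
    rwa [hstar] at this
  set b : Fin p → ℝ := fun i => Real.sqrt (Real.sqrt (μ i)) with hbdef
  set g : Fin p → ℝ := fun i => if μ i = 0 then 0 else (b i)⁻¹ with hgdef
  set V : Matrix (Fin p) (Fin d) ℝ := Uᵀ * W with hVdef
  have hVV : V * Vᵀ = diagonal μ := by
    rw [hVdef, transpose_mul, transpose_transpose,
      show Uᵀ * W * (Wᵀ * U) = Uᵀ * (W * Wᵀ) * U by simp only [Matrix.mul_assoc],
      hspec,
      show Uᵀ * (U * diagonal μ * Uᵀ) * U = (Uᵀ * U) * diagonal μ * (Uᵀ * U) by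
        simp only [Matrix.mul_assoc],
      hU2, Matrix.one_mul, Matrix.mul_one]
  have hrow : ∀ i, μ i = 0 → ∀ j, V i j = 0 := by
    intro i hi j
    have hdiag : (V * Vᵀ) i i = 0 := by rw [hVV]; simp [hi]
    have hsum : ∑ k, V i k ^ 2 = 0 := by
      rw [← hdiag]; simp [Matrix.mul_apply, sq]
    have := (Finset.sum_eq_zero_iff_of_nonneg (fun k _ => by positivity)).mp hsum j
      (Finset.mem_univ j)
    simpa using pow_eq_zero_iff (n := 2) (by norm_num) |>.mp this
  have hbne : ∀ i, μ i ≠ 0 → b i ≠ 0 := by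
    intro i hi
    have : 0 < μ i := lt_of_le_of_ne (hμ0 i) (Ne.symm hi)
    have : 0 < b i := Real.sqrt_pos.mpr (Real.sqrt_pos.mpr this)
    exact ne_of_gt this
  refine ⟨U * diagonal g * V, U * diagonal b * Uᵀ, ?_, ?_⟩
  · -- B * A = W
    have step1 : U * diagonal b * Uᵀ * (U * diagonal g * V)
        = U * (diagonal b * diagonal g) * V := by
      calc U * diagonal b * Uᵀ * (U * diagonal g * V)
          = U * diagonal b * (Uᵀ * U) * (diagonal g * V) := by simp only [Matrix.mul_assoc]
        _ = U * (diagonal b * diagonal g) * V := by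
            rw [hU2]; simp only [Matrix.mul_one, Matrix.mul_assoc]
    rw [step1, diagonal_mul_diagonal]
    have hPV : diagonal (fun i => b i * g i) * V = V := by
      ext i j
      rw [Matrix.diagonal_mul]
      by_cases h : μ i = 0
      · simp [hgdef, h, hrow i h j]
      · simp [hgdef, h, mul_inv_cancel₀ (hbne i h)]
    rw [show U * diagonal (fun i => b i * g i) * V = U * (diagonal (fun i => b i * g i) * V) by
      simp only [Matrix.mul_assoc], hPV, hVdef, ← Matrix.mul_assoc, hU1, Matrix.one_mul]
  · -- A * Aᵀ = Bᵀ * B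
    have hAT : (U * diagonal g * V)ᵀ = Vᵀ * diagonal g * Uᵀ := by
      simp [transpose_mul, diagonal_transpose, Matrix.mul_assoc]
    have hBT : (U * diagonal b * Uᵀ)ᵀ = U * diagonal b * Uᵀ := by
      simp [transpose_mul, diagonal_transpose, Matrix.mul_assoc]
    rw [hAT, hBT]
    calc U * diagonal g * V * (Vᵀ * diagonal g * Uᵀ)
        = U * (diagonal g * (V * Vᵀ) * diagonal g) * Uᵀ := by simp only [Matrix.mul_assoc]
      _ = U * (diagonal g * diagonal μ * diagonal g) * Uᵀ := by rw [hVV]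
      _ = U * diagonal (fun i => g i * μ i * g i) * Uᵀ := by
          simp only [diagonal_mul_diagonal]
      _ = U * diagonal (fun i => b i * b i) * Uᵀ := by
          have heq : (fun i => g i * μ i * g i) = fun i => b i * b i := by
            funext i
            by_cases h : μ i = 0
            · simp [hgdef, hbdef, h]
            · have hb2 : b i * b i = Real.sqrt (μ i) := Real.mul_self_sqrt (Real.sqrt_nonneg _)
              have hμs : Real.sqrt (μ i) * Real.sqrt (μ i) = μ i := Real.mul_self_sqrt (hμ0 i)
              have hμ4 : μ i = (b i * b i) * (b i * b i) := by rw [hb2, hμs]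
              simp only [hgdef, h, if_false]
              rw [hμ4]
              field_simp
          rw [heq]
      _ = U * diagonal b * Uᵀ * (U * diagonal b * Uᵀ) := by
          calc U * diagonal (fun i => b i * b i) * Uᵀ
              = U * (diagonal b * diagonal b) * Uᵀ := by rw [diagonal_mul_diagonal]
            _ = U * diagonal b * (Uᵀ * U) * (diagonal b * Uᵀ) := by
                rw [hU2]; simp only [Matrix.mul_one, Matrix.mul_assoc]
            _ = _ := by simp only [Matrix.mul_assoc]

/-- Among all factorizations `W = W₂ * W₁`, the norm
`‖W₁ᵀW₁‖_F² + ‖W₂ᵀW₂‖_F²` is minimized iff `W₁W₁ᵀ = W₂ᵀW₂`. -/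
theorem min_norm_factorization_iff_balanced {p d : ℕ}
    (W : Matrix (Fin p) (Fin d) ℝ)
    (W₁ : Matrix (Fin p) (Fin d) ℝ) (W₂ : Matrix (Fin p) (Fin p) ℝ)
    (hW : W₂ * W₁ = W) :
    (∀ (A : Matrix (Fin p) (Fin d) ℝ) (B : Matrix (Fin p) (Fin p) ℝ), B * A = W →
      trace ((W₁ᵀ * W₁)ᵀ * (W₁ᵀ * W₁)) + trace ((W₂ᵀ * W₂)ᵀ * (W₂ᵀ * W₂)) ≤
        trace ((Aᵀ * A)ᵀ * (Aᵀ * A)) + trace ((Bᵀ * B)ᵀ * (Bᵀ * B))) ↔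
    W₁ * W₁ᵀ = W₂ᵀ * W₂ := by
  constructor
  · intro hmin
    obtain ⟨A, B, hBA, hbal⟩ := exists_balanced W
    have h := hmin A B hBA
    rw [key_identity W₁ W₂, key_identity A B, hBA, hW, hbal, sub_self] at h
    simp only [transpose_zero, Matrix.zero_mul, trace_zero, zero_add] at h
    have h0 : trace ((W₁ * W₁ᵀ - W₂ᵀ * W₂)ᵀ * (W₁ * W₁ᵀ - W₂ᵀ * W₂)) = 0 :=
      le_antisymm (by linarith) (tr_sq_nonneg _)
    have := tr_sq_eq_zero _ h0
    exact sub_eq_zero.mp this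
  · intro hbal A B hBA
    rw [key_identity W₁ W₂, key_identity A B, hBA, hW, hbal, sub_self]
    simp only [transpose_zero, Matrix.zero_mul, trace_zero, zero_add]
    have := tr_sq_nonneg (A * Aᵀ - Bᵀ * B)
    linarith
end

section
/- Consider a two-layer linear model f(x) = W₂(t)W₁(t)x trained by gradient flow on any differentiable loss L(W₂W₁), i.e., dW_i/dt = −∂L/∂W_i for i = 1, 2. If the initialization satisfies W₁(0)W₁(0)ᵀ = W₂(0)ᵀW₂(0), then for all t ≥ 0, W₁(t)W₁(t)ᵀ = W₂(t)ᵀW₂(t). -/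
open Matrix

/-- Gradient flow on a two-layer linear model preserves the balancedness
`W₁ W₁ᵀ = W₂ᵀ W₂` if it holds at initialization. -/
theorem gradient_flow_preserves_balancedness {p d : ℕ}
    (W₁ : ℝ → Matrix (Fin p) (Fin d) ℝ) (W₂ : ℝ → Matrix (Fin p) (Fin p) ℝ)
    (G : ℝ → Matrix (Fin p) (Fin d) ℝ)
    (h1 : ∀ (t : ℝ) (i : Fin p) (j : Fin d),
      HasDerivAt (fun s => W₁ s i j) ((-((W₂ t)ᵀ * G t)) i j) t)
    (h2 : ∀ (t : ℝ) (i j : Fin p),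
      HasDerivAt (fun s => W₂ s i j) ((-(G t * (W₁ t)ᵀ)) i j) t)
    (h0 : W₁ 0 * (W₁ 0)ᵀ = (W₂ 0)ᵀ * W₂ 0) :
    ∀ t : ℝ, 0 ≤ t → W₁ t * (W₁ t)ᵀ = (W₂ t)ᵀ * W₂ t := by
  have key : ∀ (s : ℝ) (i j : Fin p),
      HasDerivAt (fun u => (W₁ u * (W₁ u)ᵀ) i j - ((W₂ u)ᵀ * W₂ u) i j) 0 s := by
    intro s i j
    set A := -((W₂ s)ᵀ * G s) with hA
    set B := -(G s * (W₁ s)ᵀ) with hB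
    have hAfun : HasDerivAt (fun u => (W₁ u * (W₁ u)ᵀ) i j)
        ((A * (W₁ s)ᵀ + W₁ s * Aᵀ) i j) s := by
      have := HasDerivAt.fun_sum (fun k (_ : k ∈ Finset.univ) =>
        (h1 s i k).fun_mul (h1 s j k))
      simp only [← hA] at this
      refine HasDerivAt.congr_deriv this (Eq.symm ?_)
      simp only [Matrix.add_apply, mul_apply, transpose_apply]
      exact Finset.sum_add_distrib.symm
    have hBfun : HasDerivAt (fun u => ((W₂ u)ᵀ * W₂ u) i j)
        ((Bᵀ * W₂ s + (W₂ s)ᵀ * B) i j) s := by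
      have := HasDerivAt.fun_sum (fun k (_ : k ∈ Finset.univ) =>
        (h2 s k i).fun_mul (h2 s k j))
      simp only [← hB] at this
      refine HasDerivAt.congr_deriv this (Eq.symm ?_)
      simp only [Matrix.add_apply, mul_apply, transpose_apply]
      exact Finset.sum_add_distrib.symm
    have hzero : (A * (W₁ s)ᵀ + W₁ s * Aᵀ) i j - (Bᵀ * W₂ s + (W₂ s)ᵀ * B) i j = 0 := by
      have : A * (W₁ s)ᵀ + W₁ s * Aᵀ = Bᵀ * W₂ s + (W₂ s)ᵀ * B := by
        rw [hA, hB]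
        simp only [transpose_neg, transpose_mul, transpose_transpose,
          Matrix.neg_mul, Matrix.mul_neg, Matrix.mul_assoc]
        abel
      rw [this, sub_self]
    have := hAfun.sub hBfun
    rwa [hzero] at this
  have hdiff : ∀ i j : Fin p, Differentiable ℝ
      (fun u => (W₁ u * (W₁ u)ᵀ) i j - ((W₂ u)ᵀ * W₂ u) i j) :=
    fun i j u => ((key u i j).differentiableAt : _)
  intro t _
  ext i j
  have hconst : (W₁ t * (W₁ t)ᵀ) i j - ((W₂ t)ᵀ * W₂ t) i j
      = (W₁ 0 * (W₁ 0)ᵀ) i j - ((W₂ 0)ᵀ * W₂ 0) i j :=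
    is_const_of_deriv_eq_zero (hdiff i j) (fun x => (key x i j).deriv) t 0
  have := hconst
  rw [h0, sub_self] at this
  linarith [this]
end

section
/- Suppose the gradient of a loss with respect to layer weights W₁, W₂ takes the form ∂L/∂W₁ = W₂ᵀG and ∂L/∂W₂ = GW₁ᵀ for some matrix G. Then under gradient flow, d/dt(W₁W₁ᵀ − W₂ᵀW₂) = 0. -/
open Matrix

/-- If the gradients have the layered form `∂L/∂W₁ = W₂ᵀG`, `∂L/∂W₂ = GW₁ᵀ`, then under
gradient flow `d/dt (W₁W₁ᵀ − W₂ᵀW₂) = 0`. -/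
theorem gradient_flow_balancedness_invariant_deriv {p d : ℕ}
    (W₁ : ℝ → Matrix (Fin p) (Fin d) ℝ) (W₂ : ℝ → Matrix (Fin p) (Fin p) ℝ)
    (G : ℝ → Matrix (Fin p) (Fin d) ℝ)
    (h1 : ∀ (t : ℝ) (i : Fin p) (j : Fin d),
      HasDerivAt (fun s => W₁ s i j) ((-((W₂ t)ᵀ * G t)) i j) t)
    (h2 : ∀ (t : ℝ) (i j : Fin p),
      HasDerivAt (fun s => W₂ s i j) ((-(G t * (W₁ t)ᵀ)) i j) t) :
    ∀ (t : ℝ) (i j : Fin p),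
      HasDerivAt (fun s => (W₁ s * (W₁ s)ᵀ - (W₂ s)ᵀ * W₂ s) i j) 0 t := by
  intro t i j
  have hA : HasDerivAt (fun s => (W₁ s * (W₁ s)ᵀ) i j)
      (∑ k, ((-((W₂ t)ᵀ * G t)) i k * W₁ t j k + W₁ t i k * (-((W₂ t)ᵀ * G t)) j k)) t := by
    simp only [Matrix.mul_apply, Matrix.transpose_apply]
    exact HasDerivAt.fun_sum fun k _ => (h1 t i k).mul (h1 t j k)
  have hB : HasDerivAt (fun s => ((W₂ s)ᵀ * W₂ s) i j)
      (∑ k, ((-(G t * (W₁ t)ᵀ)) k i * W₂ t k j + W₂ t k i * (-(G t * (W₁ t)ᵀ)) k j)) t := by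
    simp only [Matrix.mul_apply, Matrix.transpose_apply]
    exact HasDerivAt.fun_sum fun k _ => (h2 t k i).mul (h2 t k j)
  have h := hA.fun_sub hB
  have heq : (∑ k, ((-((W₂ t)ᵀ * G t)) i k * W₁ t j k + W₁ t i k * (-((W₂ t)ᵀ * G t)) j k))
      - (∑ k, ((-(G t * (W₁ t)ᵀ)) k i * W₂ t k j + W₂ t k i * (-(G t * (W₁ t)ᵀ)) k j)) = 0 := by
    rw [sub_eq_zero]
    simp only [Matrix.neg_apply, Matrix.mul_apply, Matrix.transpose_apply]
    calc (∑ k, (-(∑ l, W₂ t l i * G t l k) * W₁ t j k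
            + W₁ t i k * -(∑ l, W₂ t l j * G t l k)))
        = ∑ k : Fin d, ∑ l : Fin p,
            (-(W₂ t l i * G t l k) * W₁ t j k + W₁ t i k * -(W₂ t l j * G t l k)) := by
          refine Finset.sum_congr rfl fun k _ => ?_
          rw [Finset.sum_add_distrib, neg_mul, Finset.sum_mul, mul_neg, Finset.mul_sum,
            ← Finset.sum_neg_distrib, ← Finset.sum_neg_distrib]
          congr 1 <;> exact Finset.sum_congr rfl fun l _ => by ring
      _ = ∑ l : Fin p, ∑ k : Fin d,
            (-(W₂ t l i * G t l k) * W₁ t j k + W₁ t i k * -(W₂ t l j * G t l k)) :=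
          Finset.sum_comm
      _ = ∑ k, (-(∑ l, G t k l * W₁ t i l) * W₂ t k j
            + W₂ t k i * -(∑ l, G t k l * W₁ t j l)) := by
          refine Finset.sum_congr rfl fun k _ => ?_
          rw [Finset.sum_add_distrib, neg_mul, Finset.sum_mul, mul_neg, Finset.mul_sum,
            ← Finset.sum_neg_distrib, ← Finset.sum_neg_distrib]
          rw [add_comm]
          congr 1 <;> exact Finset.sum_congr rfl fun l _ => by ring
  rw [heq] at h
  simpa [Matrix.sub_apply] using h
end

section
/- If W₁ ∈ ℝ^{p×d} and W₂ ∈ ℝ^{p×p} satisfy W₁W₁ᵀ = W₂ᵀW₂, then the nonzero singular values of W₁ equal the nonzero singular values of W₂, and the nonzero singular values of the product W₂W₁ are exactly the squares of the corresponding nonzero singular values of W₁. -/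
open Matrix

/-- Shifting an eigenvector of `AᵀA` with nonzero eigenvalue to one of `AAᵀ`. -/
lemma shift_eig {m n : ℕ} (A : Matrix (Fin m) (Fin n) ℝ) (μ : ℝ) (hμ : μ ≠ 0)
    (v : Fin n → ℝ) (hv : v ≠ 0) (h : (Aᵀ * A).mulVec v = μ • v) :
    A.mulVec v ≠ 0 ∧ (A * Aᵀ).mulVec (A.mulVec v) = μ • (A.mulVec v) := by
  constructor
  · intro h0
    have : (Aᵀ * A).mulVec v = 0 := by
      rw [← Matrix.mulVec_mulVec, h0, Matrix.mulVec_zero]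
    rw [h] at this
    rcases smul_eq_zero.mp this with h' | h'
    · exact hμ h'
    · exact hv h'
  · have key : (A * Aᵀ).mulVec (A.mulVec v) = A.mulVec ((Aᵀ * A).mulVec v) := by
      rw [Matrix.mulVec_mulVec, Matrix.mulVec_mulVec, Matrix.mul_assoc]
    rw [key, h, Matrix.mulVec_smul]

/-- If `W₁W₁ᵀ = W₂ᵀW₂`, the nonzero singular values of `W₁` and `W₂` agree (stated via the
positive eigenvalues `μ` of `W₁ᵀW₁` resp. `W₂W₂ᵀ`), and the nonzero singular values of the
product `W₂W₁` are the squares of those of `W₁` (stated via eigenvalue `μ²` of `(W₂W₁)ᵀ(W₂W₁)`). -/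
theorem balanced_singular_values {p d : ℕ}
    (W₁ : Matrix (Fin p) (Fin d) ℝ) (W₂ : Matrix (Fin p) (Fin p) ℝ)
    (hbal : W₁ * W₁ᵀ = W₂ᵀ * W₂) (μ : ℝ) (hμ : 0 < μ) :
    ((∃ v : Fin d → ℝ, v ≠ 0 ∧ (W₁ᵀ * W₁).mulVec v = μ • v) ↔
      (∃ v : Fin p → ℝ, v ≠ 0 ∧ (W₂ * W₂ᵀ).mulVec v = μ • v)) ∧
    ((∃ v : Fin d → ℝ, v ≠ 0 ∧ (W₁ᵀ * W₁).mulVec v = μ • v) ↔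
      (∃ v : Fin d → ℝ, v ≠ 0 ∧ ((W₂ * W₁)ᵀ * (W₂ * W₁)).mulVec v = (μ ^ 2) • v)) := by
  have hμ' : μ ≠ 0 := ne_of_gt hμ
  constructor
  · constructor
    · rintro ⟨v, hv, h⟩
      obtain ⟨h1, h2⟩ := shift_eig W₁ μ hμ' v hv h
      rw [hbal] at h2
      obtain ⟨h3, h4⟩ := shift_eig W₂ μ hμ' _ h1 h2
      exact ⟨_, h3, h4⟩
    · rintro ⟨v, hv, h⟩
      have h' : ((W₂ᵀ)ᵀ * W₂ᵀ).mulVec v = μ • v := by rwa [Matrix.transpose_transpose]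
      obtain ⟨h1, h2⟩ := shift_eig W₂ᵀ μ hμ' v hv h'
      rw [Matrix.transpose_transpose, ← hbal] at h2
      have h2' : ((W₁ᵀ)ᵀ * W₁ᵀ).mulVec (W₂ᵀ.mulVec v) = μ • (W₂ᵀ.mulVec v) := by
        rwa [Matrix.transpose_transpose]
      obtain ⟨h3, h4⟩ := shift_eig W₁ᵀ μ hμ' _ h1 h2'
      rw [Matrix.transpose_transpose] at h4
      exact ⟨_, h3, h4⟩
  · have hM : (W₂ * W₁)ᵀ * (W₂ * W₁) = (W₁ᵀ * W₁) * (W₁ᵀ * W₁) := by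
      rw [Matrix.transpose_mul, Matrix.mul_assoc, ← Matrix.mul_assoc W₂ᵀ, ← hbal,
        Matrix.mul_assoc W₁, ← Matrix.mul_assoc]
    constructor
    · rintro ⟨v, hv, h⟩
      refine ⟨v, hv, ?_⟩
      rw [hM, ← Matrix.mulVec_mulVec, h, Matrix.mulVec_smul, h, smul_smul, sq]
    · rintro ⟨v, hv, h⟩
      rw [hM, ← Matrix.mulVec_mulVec] at h
      set M := W₁ᵀ * W₁ with hMdef
      by_cases hu : M.mulVec v + μ • v = 0
      · exfalso
        have hMv : M.mulVec v = (-μ) • v := by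
          have := eq_neg_of_add_eq_zero_left hu
          rw [this, neg_smul]
        have hpos : (0:ℝ) < v ⬝ᵥ v := by
          rcases lt_or_eq_of_le ((Finset.sum_nonneg fun i _ => mul_self_nonneg (v i) : (0:ℝ) ≤ v ⬝ᵥ v)) with h' | h'
          · exact h'
          · exact absurd ((dotProduct_self_eq_zero).mp h'.symm) hv
        have hnn : 0 ≤ v ⬝ᵥ M.mulVec v := by
          rw [hMdef, ← Matrix.mulVec_mulVec, Matrix.dotProduct_mulVec,
            Matrix.vecMul_transpose]
          exact Finset.sum_nonneg fun i _ => mul_self_nonneg _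
        rw [hMv, dotProduct_smul, smul_eq_mul] at hnn
        nlinarith
      · refine ⟨_, hu, ?_⟩
        have : M.mulVec (M.mulVec v + μ • v) = μ ^ 2 • v + μ • M.mulVec v := by
          rw [Matrix.mulVec_add, Matrix.mulVec_smul, h]
        rw [this, smul_add, smul_smul, ← sq, add_comm]
end

section
/- Suppose all features have equal augmentation parameters and all pretraining feature strengths satisfy φ_i ≤ σ, with the downstream-relevant strength φ_{j*} being among the selected (largest) p features but strictly smaller than at least one other selected feature strength, and all downstream strengths φ̂_j equal. Then the weight ratio γ_{j}/γ_{j*} ≥ 1 for all selected j with strict inequality for some j, and consequently Δ < 0, i.e., pre-projection representations have smaller sample complexity indicator. -/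
/-- Corollary 3.7 case (2): equal augmentation, all pretraining strengths `φ i ≤ σ`, with the
downstream-relevant strength smallest among the selected features (strictly smaller than some),
and equal downstream strengths. Then the weight ratios satisfy `γ jstar ≤ γ i` with some strict
inequality, and `Δ < 0`. -/
theorem delta_neg_weak_feature {n : ℕ} (φ : Fin n → ℝ) (jstar : Fin n) (α σ φhat : ℝ)
    (hα0 : 0 ≤ α) (hα1 : α < 1) (hσ : 0 < σ)
    (hφpos : ∀ i, 0 < φ i) (hφσ : ∀ i, φ i ≤ σ)
    (hmin : ∀ i, φ jstar ≤ φ i) (hstrict : ∃ i, φ jstar < φ i)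
    (hφhat : 0 < φhat) :
    let γ : Fin n → ℝ := fun i => Real.sqrt ((1 - α) * φ i / ((φ i) ^ 2 + σ ^ 2))
    (∀ i, 1 ≤ γ i / γ jstar) ∧ (∃ i, 1 < γ i / γ jstar) ∧
    ∑ i ∈ Finset.univ.erase jstar,
        φhat ^ 2 * ((γ i) ^ 2 / (γ jstar) ^ 2 - (γ i) ^ 4 / (γ jstar) ^ 4) < 0 := by
  intro γ
  have hα : 0 < 1 - α := by linarith
  have hden : ∀ i, 0 < (φ i) ^ 2 + σ ^ 2 := fun i => by positivity
  have hfpos : ∀ i, 0 < (1 - α) * φ i / ((φ i) ^ 2 + σ ^ 2) :=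
    fun i => div_pos (mul_pos hα (hφpos i)) (hden i)
  have hγpos : ∀ i, 0 < γ i := fun i => Real.sqrt_pos.2 (hfpos i)
  have hmono : ∀ i, γ jstar ≤ γ i := by
    intro i
    apply Real.sqrt_le_sqrt
    rw [div_le_div_iff₀ (hden jstar) (hden i)]
    have hp : φ i * φ jstar ≤ σ ^ 2 := by nlinarith [hφσ i, hφσ jstar, hφpos i, hφpos jstar]
    nlinarith [mul_nonneg (mul_nonneg hα.le (sub_nonneg.2 (hmin i))) (sub_nonneg.2 hp)]
  obtain ⟨w, hw⟩ := hstrict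
  have hwstrict : γ jstar < γ w := by
    apply Real.sqrt_lt_sqrt (hfpos jstar).le
    rw [div_lt_div_iff₀ (hden jstar) (hden w)]
    have hp : φ w * φ jstar < σ ^ 2 := by nlinarith [hφσ w, hw, hφpos jstar, hφpos w]
    nlinarith [mul_pos (mul_pos hα (sub_pos.2 hw)) (sub_pos.2 hp)]
  have hratio : ∀ i, 1 ≤ γ i / γ jstar := fun i => (one_le_div (hγpos jstar)).2 (hmono i)
  have hratiow : 1 < γ w / γ jstar := (one_lt_div (hγpos jstar)).2 hwstrict
  refine ⟨hratio, ⟨w, hratiow⟩, ?_⟩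
  have key : ∀ i, γ jstar ≤ γ i →
      φhat ^ 2 * ((γ i) ^ 2 / (γ jstar) ^ 2 - (γ i) ^ 4 / (γ jstar) ^ 4) ≤ 0 := by
    intro i hi
    have ht : (1:ℝ) ≤ (γ i) ^ 2 / (γ jstar) ^ 2 := by
      apply (one_le_div (pow_pos (hγpos jstar) 2)).2
      exact pow_le_pow_left₀ (hγpos jstar).le hi 2
    have h4 : (γ i) ^ 4 / (γ jstar) ^ 4 = ((γ i) ^ 2 / (γ jstar) ^ 2) ^ 2 := by
      rw [div_pow]; ring_nf
    rw [h4]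
    set t := (γ i) ^ 2 / (γ jstar) ^ 2
    have hneg : t - t ^ 2 ≤ 0 := by nlinarith [mul_nonneg (by linarith : (0:ℝ) ≤ t) (by linarith : (0:ℝ) ≤ t - 1)]
    exact mul_nonpos_of_nonneg_of_nonpos (sq_nonneg φhat) hneg
  have keyw : φhat ^ 2 * ((γ w) ^ 2 / (γ jstar) ^ 2 - (γ w) ^ 4 / (γ jstar) ^ 4) < 0 := by
    have ht : (1:ℝ) < (γ w) ^ 2 / (γ jstar) ^ 2 := by
      apply (one_lt_div (pow_pos (hγpos jstar) 2)).2
      exact pow_lt_pow_left₀ hwstrict (hγpos jstar).le (by norm_num)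
    have h4 : (γ w) ^ 4 / (γ jstar) ^ 4 = ((γ w) ^ 2 / (γ jstar) ^ 2) ^ 2 := by
      rw [div_pow]; ring_nf
    rw [h4]
    set t := (γ w) ^ 2 / (γ jstar) ^ 2
    have hneg : t - t ^ 2 < 0 := by nlinarith [mul_pos (by linarith : (0:ℝ) < t) (by linarith : (0:ℝ) < t - 1)]
    exact mul_neg_of_pos_of_neg (pow_pos hφhat 2) hneg
  have hwne : w ≠ jstar := by
    intro h; rw [h] at hwstrict; exact lt_irrefl _ hwstrict
  calc ∑ i ∈ Finset.univ.erase jstar,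
        φhat ^ 2 * ((γ i) ^ 2 / (γ jstar) ^ 2 - (γ i) ^ 4 / (γ jstar) ^ 4)
      < ∑ i ∈ Finset.univ.erase jstar, (0:ℝ) := by
        apply Finset.sum_lt_sum
        · exact fun i _ => key i (hmono i)
        · exact ⟨w, Finset.mem_erase.2 ⟨hwne, Finset.mem_univ w⟩, keyw⟩
    _ = 0 := Finset.sum_const_zero
end

section
/- Suppose all features share the same augmentation parameter α ∈ [0,1), there are at least two selected features, and for all i ≠ j*, φ_{j*} > max{φ_i, σ²/φ_i}. Then for each i ≠ j*, γ_i > γ_{j*}, and therefore Δ = Σ_{i ≠ j*} φ̂_i²(γ_i²/γ_{j*}² − γ_i⁴/γ_{j*}⁴) < 0 whenever some φ̂_i > 0. -/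
/-- Corollary 3.7 case (3): equal augmentation, at least two selected features, and the
downstream-relevant strength `φ jstar > max{φ i, σ²/φ i}` for all `i ≠ jstar`. Then
`γ i > γ jstar` for all `i ≠ jstar`, hence `Δ < 0` whenever some `φ̂ i > 0`. -/
theorem delta_neg_strong_feature {n : ℕ} (φ φhat : Fin n → ℝ) (jstar : Fin n) (α σ : ℝ)
    (hα0 : 0 ≤ α) (hα1 : α < 1) (hσ : 0 < σ) (hn : 2 ≤ n)
    (hφpos : ∀ i, 0 < φ i)
    (hstrong : ∀ i, i ≠ jstar → max (φ i) (σ ^ 2 / φ i) < φ jstar)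
    (hφhat : ∀ i, 0 ≤ φhat i) :
    let γ : Fin n → ℝ := fun i => Real.sqrt ((1 - α) * φ i / ((φ i) ^ 2 + σ ^ 2))
    (∀ i, i ≠ jstar → γ jstar < γ i) ∧
    ((∃ i, i ≠ jstar ∧ 0 < φhat i) →
      ∑ i ∈ Finset.univ.erase jstar,
          (φhat i) ^ 2 * ((γ i) ^ 2 / (γ jstar) ^ 2 - (γ i) ^ 4 / (γ jstar) ^ 4) < 0) := by
  intro γ
  have hα : 0 < 1 - α := by linarith
  have hden : ∀ i, 0 < (φ i) ^ 2 + σ ^ 2 := fun i => by positivity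
  have harg : ∀ i, 0 < (1 - α) * φ i / ((φ i) ^ 2 + σ ^ 2) := fun i => by
    have := hφpos i; positivity
  have hγpos : ∀ i, 0 < γ i := fun i => Real.sqrt_pos.mpr (harg i)
  have hmono : ∀ i, i ≠ jstar → γ jstar < γ i := by
    intro i hi
    apply Real.sqrt_lt_sqrt (le_of_lt (harg jstar))
    rw [div_lt_div_iff₀ (hden jstar) (hden i)]
    have h1 : φ i < φ jstar := lt_of_le_of_lt (le_max_left _ _) (hstrong i hi)
    have h2 : σ ^ 2 / φ i < φ jstar := lt_of_le_of_lt (le_max_right _ _) (hstrong i hi)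
    have h3 : σ ^ 2 < φ jstar * φ i := by
      rw [div_lt_iff₀ (hφpos i)] at h2; linarith
    nlinarith [mul_pos (sub_pos.mpr h1) (sub_pos.mpr h3), hφpos i, hφpos jstar]
  refine ⟨hmono, ?_⟩
  rintro ⟨i₀, hi₀, hφhat₀⟩
  have key : ∀ i ∈ Finset.univ.erase jstar,
      (φhat i) ^ 2 * ((γ i) ^ 2 / (γ jstar) ^ 2 - (γ i) ^ 4 / (γ jstar) ^ 4) ≤ (0 : ℝ) := by
    intro i hi
    have hi' : i ≠ jstar := Finset.ne_of_mem_erase hi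
    have hr : 1 < (γ i) ^ 2 / (γ jstar) ^ 2 := by
      rw [lt_div_iff₀ (pow_pos (hγpos jstar) 2)]
      nlinarith [hmono i hi', hγpos jstar]
    have hr2 : (γ i) ^ 4 / (γ jstar) ^ 4 = ((γ i) ^ 2 / (γ jstar) ^ 2) ^ 2 := by
      rw [div_pow]; ring_nf
    have hneg : (γ i) ^ 2 / (γ jstar) ^ 2 - (γ i) ^ 4 / (γ jstar) ^ 4 < 0 := by
      rw [hr2]; nlinarith
    have := hφhat i
    nlinarith [sq_nonneg (φhat i)]
  have hstrict : (φhat i₀) ^ 2 * ((γ i₀) ^ 2 / (γ jstar) ^ 2 - (γ i₀) ^ 4 / (γ jstar) ^ 4) < 0 := by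
    have hr : 1 < (γ i₀) ^ 2 / (γ jstar) ^ 2 := by
      rw [lt_div_iff₀ (pow_pos (hγpos jstar) 2)]
      nlinarith [hmono i₀ hi₀, hγpos jstar]
    have hr2 : (γ i₀) ^ 4 / (γ jstar) ^ 4 = ((γ i₀) ^ 2 / (γ jstar) ^ 2) ^ 2 := by
      rw [div_pow]; ring_nf
    have hneg : (γ i₀) ^ 2 / (γ jstar) ^ 2 - (γ i₀) ^ 4 / (γ jstar) ^ 4 < 0 := by
      rw [hr2]; nlinarith
    have hp : 0 < (φhat i₀) ^ 2 := pow_pos hφhat₀ 2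
    nlinarith
  calc ∑ i ∈ Finset.univ.erase jstar,
        (φhat i) ^ 2 * ((γ i) ^ 2 / (γ jstar) ^ 2 - (γ i) ^ 4 / (γ jstar) ^ 4)
      < ∑ i ∈ Finset.univ.erase jstar, (0:ℝ) := by
        apply Finset.sum_lt_sum key
        exact ⟨i₀, Finset.mem_erase.mpr ⟨hi₀, Finset.mem_univ _⟩, hstrict⟩
    _ = 0 := by simp
end

section
/- Under the same assumptions (coordinate-wise odd model, coordinate-wise sign-symmetric data distribution), the contrastive loss L(f) = −2E[f(x)ᵀf(x⁺)] + E[(f(x)ᵀf(x⁻))²] decomposes as a sum over coordinates: L(f) = Σ_{i=1}^p ( −2E[f_i(x_i)f_i(x_i⁺)] + E[(f_i(x_i)f_i(x_i⁻))²] ). -/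
open MeasureTheory

lemma flip_measurable {p : ℕ} (i : Fin p) :
    Measurable (fun x : Fin p → ℝ => Function.update x i (-(x i))) := by
  apply measurable_pi_lambda
  intro a
  by_cases h : a = i
  · subst h
    simp only [Function.update_self]
    exact (measurable_pi_apply a).neg
  · simp only [Function.update_apply, if_neg h]
    exact measurable_pi_apply a

lemma cross_zero {p : ℕ} (μ : Measure (Fin p → ℝ)) [IsProbabilityMeasure μ]
    (f : Fin p → ℝ → ℝ) (hmeas : ∀ i, Measurable (f i))
    (hodd : ∀ i a, f i (-a) = -f i a)
    (hsym : ∀ i : Fin p,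
      Measure.map (fun x => Function.update x i (-(x i))) μ = μ)
    (i j : Fin p) (hij : j ≠ i) :
    ∫ z : (Fin p → ℝ) × (Fin p → ℝ),
      f i (z.1 i) * f i (z.2 i) * (f j (z.1 j) * f j (z.2 j)) ∂(μ.prod μ) = 0 := by
  set T : (Fin p → ℝ) → (Fin p → ℝ) := fun x => Function.update x i (-(x i)) with hT
  have hTm : Measurable T := flip_measurable i
  set S : (Fin p → ℝ) × (Fin p → ℝ) → (Fin p → ℝ) × (Fin p → ℝ) := Prod.map T id with hS
  have hSm : Measurable S := hTm.prodMap measurable_id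
  have hmap : Measure.map S (μ.prod μ) = μ.prod μ := by
    rw [hS, ← Measure.map_prod_map _ _ hTm measurable_id, Measure.map_id,
      show Measure.map T μ = μ from hsym i]
  set g : (Fin p → ℝ) × (Fin p → ℝ) → ℝ :=
    fun z => f i (z.1 i) * f i (z.2 i) * (f j (z.1 j) * f j (z.2 j)) with hg
  have hgm : Measurable g := by
    apply Measurable.mul <;> apply Measurable.mul
    · exact (hmeas i).comp ((measurable_pi_apply i).comp measurable_fst)
    · exact (hmeas i).comp ((measurable_pi_apply i).comp measurable_snd)
    · exact (hmeas j).comp ((measurable_pi_apply j).comp measurable_fst)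
    · exact (hmeas j).comp ((measurable_pi_apply j).comp measurable_snd)
  have key : ∫ z, g z ∂(μ.prod μ) = ∫ z, g (S z) ∂(μ.prod μ) := by
    conv_lhs => rw [← hmap]
    rw [integral_map hSm.aemeasurable hgm.aestronglyMeasurable]
  have hcomp : ∀ z, g (S z) = - g z := by
    intro z
    simp only [hg, hS, Prod.map, id]
    have h1 : T z.1 i = -(z.1 i) := Function.update_self i _ _
    have h2 : T z.1 j = z.1 j := Function.update_of_ne hij _ _
    rw [h1, h2, hodd i]
    ring
  rw [show (fun z => g (S z)) = fun z => - g z from funext hcomp] at key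
  rw [integral_neg] at key
  linarith

/-- Coordinate-wise decomposition of the spectral contrastive loss for a coordinate-wise odd
model over a coordinate-wise sign-symmetric data distribution: `ν` is the distribution of
positive pairs `(x, x⁺)` and negatives are independent draws from the marginal `μ`. -/
theorem contrastive_loss_coordinate_decomposition {p : ℕ}
    (μ : Measure (Fin p → ℝ)) (ν : Measure ((Fin p → ℝ) × (Fin p → ℝ)))
    [IsProbabilityMeasure μ] [IsProbabilityMeasure ν]
    (f : Fin p → ℝ → ℝ) (hmeas : ∀ i, Measurable (f i))
    (hodd : ∀ i a, f i (-a) = -f i a)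
    (hsym : ∀ i : Fin p,
      Measure.map (fun x => Function.update x i (-(x i))) μ = μ)
    (hIntPos : ∀ i, Integrable
      (fun z : (Fin p → ℝ) × (Fin p → ℝ) => f i (z.1 i) * f i (z.2 i)) ν)
    (hIntNeg : ∀ i j : Fin p, Integrable
      (fun z : (Fin p → ℝ) × (Fin p → ℝ) =>
        f i (z.1 i) * f i (z.2 i) * (f j (z.1 j) * f j (z.2 j))) (μ.prod μ)) :
    (-2) * ∫ z, (∑ i, f i (z.1 i) * f i (z.2 i)) ∂ν +
        ∫ z, (∑ i, f i (z.1 i) * f i (z.2 i)) ^ 2 ∂(μ.prod μ) =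
      ∑ i, ((-2) * ∫ z, f i (z.1 i) * f i (z.2 i) ∂ν +
        ∫ z, (f i (z.1 i) * f i (z.2 i)) ^ 2 ∂(μ.prod μ)) := by
  have hlin : ∫ z, (∑ i, f i (z.1 i) * f i (z.2 i)) ∂ν
      = ∑ i, ∫ z, f i (z.1 i) * f i (z.2 i) ∂ν :=
    integral_finset_sum _ (fun i _ => hIntPos i)
  have hsq : ∫ z, (∑ i, f i (z.1 i) * f i (z.2 i)) ^ 2 ∂(μ.prod μ)
      = ∑ i, ∫ z, (f i (z.1 i) * f i (z.2 i)) ^ 2 ∂(μ.prod μ) := by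
    have hexp : ∀ z : (Fin p → ℝ) × (Fin p → ℝ),
        (∑ i, f i (z.1 i) * f i (z.2 i)) ^ 2 =
        ∑ i, ∑ j, f i (z.1 i) * f i (z.2 i) * (f j (z.1 j) * f j (z.2 j)) := by
      intro z
      rw [sq, Finset.sum_mul_sum]
    simp_rw [hexp]
    rw [integral_finset_sum _ (fun i _ => integrable_finset_sum _ (fun j _ => hIntNeg i j))]
    refine Finset.sum_congr rfl (fun i _ => ?_)
    rw [integral_finset_sum _ (fun j _ => hIntNeg i j)]
    rw [Finset.sum_eq_single i]
    · rw [← integral_congr_ae]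
      filter_upwards with z
      ring
    · intro j _ hji
      exact cross_zero μ f hmeas hodd hsym i j hji
    · intro h; exact absurd (Finset.mem_univ i) h
  rw [hlin, hsq, Finset.mul_sum, ← Finset.sum_add_distrib]
end
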